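/- The filtering iteration defined by b₀ = ‖A‖-related initial value with thresholds ε_f^{(n+1)} = ε_g/m_n and m_{n+1} = b_{n+1}/ε_f^{(n+1)} produces a nonincreasing sequence b_n whenever b_n > ε_g, and terminates in finitely many steps with b_n ≤ ε_g(1 + e_r) for any e_r > 0. -/

import Mathlib

attribute [local instance] Matrix.frobeniusNormedAddCommGroup

private lemma frob_mono {n : ℕ} (B C : Matrix (Fin n) (Fin n) ℂ)
    (h : ∀ i j, ‖B i j‖ ≤ ‖C i j‖) : ‖B‖ ≤ ‖C‖ := by
  rw [Matrix.frobenius_norm_def, Matrix.frobenius_norm_def]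
  apply Real.rpow_le_rpow
  · positivity
  · apply Finset.sum_le_sum; intro i _
    apply Finset.sum_le_sum; intro j _
    exact Real.rpow_le_rpow (norm_nonneg _) (h i j) (by norm_num)
  · norm_num

private lemma frob_bound {n : ℕ} (B : Matrix (Fin n) (Fin n) ℂ) (c : ℝ) (hc : 0 ≤ c)
    (h : ∀ i j, ‖B i j‖ ≤ c) : ‖B‖ ≤ n * c := by
  rw [Matrix.frobenius_norm_def]
  have key : (∑ i, ∑ j, ‖B i j‖ ^ (2 : ℝ)) ≤ ((n : ℝ) * c) ^ (2 : ℝ) := by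
    calc (∑ i : Fin n, ∑ j : Fin n, ‖B i j‖ ^ (2 : ℝ))
        ≤ ∑ _i : Fin n, ∑ _j : Fin n, c ^ (2 : ℝ) := by
          apply Finset.sum_le_sum; intro i _
          apply Finset.sum_le_sum; intro j _
          exact Real.rpow_le_rpow (norm_nonneg _) (h i j) (by norm_num)
      _ = (n : ℝ) * ((n : ℝ) * c ^ (2 : ℝ)) := by
          simp [Finset.sum_const, mul_comm]
      _ ≤ ((n : ℝ) * c) ^ (2 : ℝ) := by
          rw [Real.rpow_two, Real.rpow_two]; ring_nf
          nlinarith [Nat.cast_nonneg (α := ℝ) n, sq_nonneg ((n:ℝ) - 1)]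
  calc (∑ i, ∑ j, ‖B i j‖ ^ (2 : ℝ)) ^ (1/2 : ℝ)
      ≤ (((n : ℝ) * c) ^ (2 : ℝ)) ^ (1/2 : ℝ) := by
        apply Real.rpow_le_rpow (by positivity) key (by norm_num)
    _ = (n : ℝ) * c := by
        rw [← Real.rpow_mul (by positivity)]
        norm_num

/-- Algorithm 4.1 (filtering): with thresholds `ε_f^{(k+1)} = ε_g / m_k`,
`m_{k+1} = b_{k+1} / ε_f^{(k+1)}`, `m₀ = 1`, where at each step the entries of the
residual matrix with absolute value exceeding the threshold are removed, and
`b_k = ‖residual_k‖`, the sequence `b_k` is nonincreasing whenever `b_k > ε_g`, and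
for any `e_r > 0` there is a step at which `b_k ≤ ε_g (1 + e_r)`. -/
theorem filtering_terminates {n : ℕ} (εg er : ℝ) (hεg : 0 < εg) (her : 0 < er)
    (R : ℕ → Matrix (Fin n) (Fin n) ℂ) (m εf : ℕ → ℝ)
    (hm0 : m 0 = 1)
    (hεf : ∀ k, εf (k + 1) = εg / m k)
    (hstep : ∀ k i j, R (k + 1) i j =
      if ‖R k i j‖ > εf (k + 1) then 0 else R k i j)
    (hm : ∀ k, m (k + 1) = ‖R (k + 1)‖ / εf (k + 1)) :
    (∀ k, εg < ‖R k‖ → ‖R (k + 1)‖ ≤ ‖R k‖) ∧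
      ∃ N, ‖R N‖ ≤ εg * (1 + er) := by
  have mono : ∀ k, ‖R (k + 1)‖ ≤ ‖R k‖ := by
    intro k
    apply frob_mono
    intro i j
    rw [hstep k i j]
    split
    · simp [norm_nonneg]
    · exact le_refl _
  constructor
  · intro k _; exact mono k
  · by_contra hcon
    push_neg at hcon
    -- hcon : ∀ N, εg * (1 + er) < ‖R N‖
    have hgrow : ∀ k, (1 + er) ^ k ≤ m k := by
      intro k
      induction k with
      | zero => simp [hm0]
      | succ k ih =>
        have hmk : 0 < m k := lt_of_lt_of_le (by positivity) ih
        have hεfk : εf (k + 1) = εg / m k := hεf k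
        have hεfpos : 0 < εf (k + 1) := by rw [hεfk]; positivity
        have : m (k + 1) = ‖R (k + 1)‖ * m k / εg := by
          rw [hm k, hεfk]; field_simp
        rw [this]
        have hb : εg * (1 + er) < ‖R (k + 1)‖ := hcon (k + 1)
        calc (1 + er) ^ (k + 1) = (1 + er) * (1 + er) ^ k := by ring
          _ ≤ (1 + er) * m k := by
              apply mul_le_mul_of_nonneg_left ih (by positivity)
          _ ≤ ‖R (k + 1)‖ * m k / εg := by
              rw [le_div_iff₀ hεg]
              nlinarith
    have hbound : ∀ k, ‖R (k + 1)‖ ≤ n * (εg / m k) := by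
      intro k
      have hmk : 0 < m k := lt_of_lt_of_le (by positivity) (hgrow k)
      apply frob_bound
      · positivity
      · intro i j
        rw [hstep k i j]
        split
        · simpa using le_of_lt (by positivity : (0:ℝ) < εg / m k)
        · rw [← hεf k]
          simpa using not_lt.mp (by assumption)
    obtain ⟨k, hk⟩ := pow_unbounded_of_one_lt ((n * εg) / (εg * (1 + er)))
      (by linarith : (1:ℝ) < 1 + er)
    have hmk : 0 < m k := lt_of_lt_of_le (by positivity) (hgrow k)
    have h1 : ‖R (k + 1)‖ ≤ n * εg / (1 + er) ^ k := by
      calc ‖R (k + 1)‖ ≤ n * (εg / m k) := hbound k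
        _ ≤ n * εg / (1 + er) ^ k := by
            rw [mul_div_assoc]
            apply mul_le_mul_of_nonneg_left _ (Nat.cast_nonneg n)
            apply div_le_div_of_nonneg_left (le_of_lt hεg) (by positivity) (hgrow k)
    have h2 : n * εg / (1 + er) ^ k < εg * (1 + er) := by
      rw [div_lt_iff₀ (by positivity)]
      have := (div_lt_iff₀ (by positivity : (0:ℝ) < εg * (1 + er))).mp hk
      nlinarith
    exact absurd (hcon (k + 1)) (not_lt.mpr (le_of_lt (lt_of_le_of_lt h1 h2)))
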